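/- arXiv:0902.1878 — 2 statements merged into one kernel-verified Lean document; each statement's English description precedes it below -/
import Mathlib

section
/- Let γ > 0, u ∈ L¹(ℝ) non-negative, and suppose v : ℝ → ℝ is C², non-negative, with v, v', v'' integrable, satisfying v'' - γ v + u = 0 and v'(x) → 0 as x → ±∞. Then ‖v'‖_{L∞(ℝ)} ≤ 2‖u‖_{L¹(ℝ)}. -/
open MeasureTheory Set Filter

theorem stmt_6 (γ : ℝ) (hγ : 0 < γ) (u v : ℝ → ℝ)
    (hu_int : MeasureTheory.Integrable u)
    (hu_nonneg : ∀ y, 0 ≤ u y)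
    (hv_C2 : ContDiff ℝ 2 v)
    (hv_nonneg : ∀ x, 0 ≤ v x)
    (hv_int : MeasureTheory.Integrable v)
    (hv'_int : MeasureTheory.Integrable (deriv v))
    (hv''_int : MeasureTheory.Integrable (deriv (deriv v)))
    (hODE : ∀ x, deriv (deriv v) x = γ * v x - u x)
    (hv'_top : Filter.Tendsto (deriv v) Filter.atTop (nhds 0))
    (hv'_bot : Filter.Tendsto (deriv v) Filter.atBot (nhds 0)) :
    ∀ x, |deriv v x| ≤ 2 * ∫ y : ℝ, |u y| := by
  have hC1 : ContDiff ℝ 1 (deriv v) :=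
    (contDiff_succ_iff_deriv.mp (by exact_mod_cast hv_C2 : ContDiff ℝ (1 + 1) v)).2.2
  have hd : ∀ x, HasDerivAt (deriv v) (deriv (deriv v) x) x :=
    fun x => (hC1.differentiable one_ne_zero x).hasDerivAt
  -- γ ∫ v = ∫ u
  have htotal : γ * ∫ x, v x = ∫ x, u x := by
    have h0 : ∫ x, deriv (deriv v) x = (0 : ℝ) - 0 :=
      integral_of_hasDerivAt_of_tendsto hd hv''_int hv'_bot hv'_top
    rw [sub_zero] at h0
    simp only [hODE] at h0
    rw [integral_sub (hv_int.const_mul γ) hu_int, MeasureTheory.integral_const_mul, sub_eq_zero] at h0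
    exact h0
  intro x
  -- v'(x) = γ ∫_{Iic x} v - ∫_{Iic x} u
  have hIic : deriv v x = γ * (∫ y in Iic x, v y) - ∫ y in Iic x, u y := by
    have h2 : ∫ y in Iic x, deriv (deriv v) y = deriv v x - 0 :=
      integral_Iic_of_hasDerivAt_of_tendsto' (fun y _ => hd y) hv''_int.integrableOn hv'_bot
    rw [sub_zero] at h2
    rw [← h2]
    simp only [hODE]
    rw [integral_sub ((hv_int.integrableOn).const_mul γ) hu_int.integrableOn,
      MeasureTheory.integral_const_mul]
  have hvI0 : 0 ≤ ∫ y in Iic x, v y := integral_nonneg fun y => hv_nonneg y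
  have hvI : ∫ y in Iic x, v y ≤ ∫ y, v y :=
    setIntegral_le_integral hv_int (ae_of_all _ hv_nonneg)
  have huI0 : 0 ≤ ∫ y in Iic x, u y := integral_nonneg fun y => hu_nonneg y
  have huI : ∫ y in Iic x, u y ≤ ∫ y, u y :=
    setIntegral_le_integral hu_int (ae_of_all _ hu_nonneg)
  have habs : ∫ y : ℝ, |u y| = ∫ y, u y :=
    integral_congr_ae (ae_of_all _ fun y => abs_of_nonneg (hu_nonneg y))
  rw [hIic, habs]
  have h1 : |γ * (∫ y in Iic x, v y) - ∫ y in Iic x, u y|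
      ≤ γ * (∫ y in Iic x, v y) + ∫ y in Iic x, u y := by
    rw [abs_sub_le_iff]
    constructor <;> nlinarith
  have h2 : γ * (∫ y in Iic x, v y) ≤ ∫ y, u y := by
    rw [← htotal]
    nlinarith
  linarith
end

section
/- Suppose u : ℝ → ℝ is non-negative and continuous, m > 1, δ > 0, μ = min(1, 1/(m-1)), and there exist constants C, C' > 0 such that |u(x) - u(y)| ≤ C'|x-y|^μ and |u(x)^(m-1+δ) - u(y)^(m-1+δ)| ≤ C · (sup_{z ∈ [x,y]} u(z))^δ · |x - y| for all x, y. If u(x₁) = 0, then u^(m-1+δ) is differentiable at x₁ with derivative 0. -/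
theorem stmt_14 (u : ℝ → ℝ) (m δ C C' x₁ : ℝ)
    (hu_cont : Continuous u) (hu_nonneg : ∀ x, 0 ≤ u x)
    (hm : 1 < m) (hδ : 0 < δ) (hC : 0 < C) (hC' : 0 < C')
    (hHolder : ∀ x y : ℝ,
      |u x - u y| ≤ C' * |x - y| ^ (min 1 (1 / (m - 1))))
    (hGrad : ∀ x y : ℝ, x ≤ y →
      |u x ^ (m - 1 + δ) - u y ^ (m - 1 + δ)|
        ≤ C * (sSup (u '' Set.Icc x y)) ^ δ * |x - y|)
    (hzero : u x₁ = 0) :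
    HasDerivAt (fun x => u x ^ (m - 1 + δ)) 0 x₁ := by
  have hm1 : (0:ℝ) < m - 1 := by linarith
  set μ := min 1 (1 / (m - 1)) with hμdef
  have hμ : 0 < μ := lt_min one_pos (by positivity)
  have hp : 0 < m - 1 + δ := by linarith
  have hpz : u x₁ ^ (m - 1 + δ) = 0 := by
    rw [hzero]; exact Real.zero_rpow hp.ne'
  have key : ∀ x, |u x ^ (m - 1 + δ)|
      ≤ (C * C' ^ δ) * (|x - x₁| ^ (μ * δ) * |x - x₁|) := by
    intro x
    have hsup : ∀ a b : ℝ, a ≤ b → (∀ z ∈ Set.Icc a b, |z - x₁| ≤ |x - x₁|) →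
        sSup (u '' Set.Icc a b) ≤ C' * |x - x₁| ^ μ := by
      intro a b _ hz
      apply Real.sSup_le
      · rintro y ⟨z, hzmem, rfl⟩
        have h1 := hHolder z x₁
        rw [hzero, sub_zero, abs_of_nonneg (hu_nonneg z)] at h1
        exact h1.trans (mul_le_mul_of_nonneg_left
          (Real.rpow_le_rpow (abs_nonneg _) (hz z hzmem) hμ.le) hC'.le)
      · positivity
    have hmain : |u x ^ (m - 1 + δ)|
        ≤ C * (C' * |x - x₁| ^ μ) ^ δ * |x - x₁| := by
      rcases le_total x x₁ with h | h
      · have hg := hGrad x x₁ h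
        rw [hpz, sub_zero] at hg
        refine hg.trans ?_
        have hs := hsup x x₁ h (by
          rintro z ⟨hz1, hz2⟩
          rw [abs_of_nonpos (by linarith), abs_of_nonpos (by linarith)]
          linarith)
        gcongr
        · exact Real.sSup_nonneg (by rintro y ⟨z, _, rfl⟩; exact hu_nonneg z)
      · have hg := hGrad x₁ x h
        rw [hpz, zero_sub, abs_neg, abs_sub_comm x₁ x] at hg
        refine hg.trans ?_
        have hs := hsup x₁ x h (by
          rintro z ⟨hz1, hz2⟩
          rw [abs_of_nonneg (by linarith), abs_of_nonneg (by linarith)]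
          linarith)
        gcongr
        · exact Real.sSup_nonneg (by rintro y ⟨z, _, rfl⟩; exact hu_nonneg z)
    refine hmain.trans_eq ?_
    rw [Real.mul_rpow hC'.le (by positivity), ← Real.rpow_mul (abs_nonneg _)]
    ring
  rw [hasDerivAt_iff_isLittleO]
  rw [Asymptotics.isLittleO_iff]
  intro c hc
  have h1 : Filter.Tendsto (fun x => (C * C' ^ δ) * |x - x₁| ^ (μ * δ)) (nhds x₁)
      (nhds 0) := by
    have h2 : Filter.Tendsto (fun x : ℝ => |x - x₁|) (nhds x₁) (nhds 0) := by
      have : Filter.Tendsto (fun x : ℝ => x - x₁) (nhds x₁) (nhds (x₁ - x₁)) :=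
        Filter.Tendsto.sub_const Filter.tendsto_id x₁
      rw [sub_self] at this
      simpa using this.abs
    have h3 : Filter.Tendsto (fun t : ℝ => t ^ (μ * δ)) (nhds 0) (nhds 0) := by
      have := (Real.continuousAt_rpow_const 0 (μ * δ) (Or.inr (by positivity))).tendsto
      simpa [Real.zero_rpow (by positivity : (μ * δ) ≠ 0)] using this
    simpa using (h3.comp h2).const_mul (C * C' ^ δ)
  filter_upwards [h1.eventually (gt_mem_nhds hc)] with x hx
  have hkey := key x
  have hb : (0:ℝ) ≤ |x - x₁| := abs_nonneg _
  calc ‖u x ^ (m - 1 + δ) - u x₁ ^ (m - 1 + δ) - (x - x₁) • (0:ℝ)‖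
      = |u x ^ (m - 1 + δ)| := by rw [hpz]; simp
    _ ≤ (C * C' ^ δ) * |x - x₁| ^ (μ * δ) * |x - x₁| := by
        rw [mul_assoc]; exact hkey
    _ ≤ c * ‖x - x₁‖ := by
        rw [Real.norm_eq_abs]
        exact mul_le_mul_of_nonneg_right hx.le hb
end
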